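/- There exist a linear schema S, a variable v, and an executable terminating path ρ through S such that S has two distinct minimal (ρ,{v})-path-faithful dynamic end slices S₁ and S₂ (minimal with respect to inclusion of retained function and predicate symbols among (ρ,{v})-dynamic end slices); hence minimal dynamic slices and minimal path-faithful dynamic slices of linear schemas need not be unique. In particular, for the schema S of Figure 4 of the paper — while P(v) { if Q(v) then { if q(v) then { x := g_good(); v := G_good(x,v); } else { x := g_bad(); v := G_bad(x,v); }; if s₁(v) then x := g₁(); if s₂(v) then x := g₂(); if t(x) then v := H(v); } else skip; v := J(v); } — with the path ρ entering the body of P five times (1st: through g_good and H, neither gᵢ; 2nd: through g_good, g₁ and H, not g₂; 3rd: through g_good, g₂ and H, not g₁; 4th: through g_bad, g₁, g₂ and H; 5th: through ⟨Q,false⟩), the quotients S₁ and S₂ obtained by deleting respectively the if statement guarded by s₂ and by s₁ are both minimal (ρ,{v})-path-faithful dynamic end slices of S, and S₁ ≠ S₂. -/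

import Mathlib

namespace SchemaSlicing

/- Function symbols, predicate symbols, variables and labels are drawn from
   fixed infinite sets; we model each by ℕ. Arities are implicit: each
   occurrence of a symbol carries the list of its arguments. -/
abbrev Var := ℕ
abbrev Fn := ℕ
abbrev Pn := ℕ
abbrev Label := ℕ

/-- Structured program schemas. `loop` is the while-construct. -/
inductive Schema : Type where
  | skip : Schema
  | label : Label → Schema
  | assign : Var → Fn → List Var → Schema
  | seq : Schema → Schema → Schema
  | ite : Pn → List Var → Schema → Schema → Schema
  | loop : Pn → List Var → Schema → Schema
  deriving DecidableEq

/-- Letters of the alphabet L(S): labels, assignment letters ⟨y:=f(x)⟩ and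
    predicate letters ⟨p(x),Z⟩. -/
inductive Letter : Type where
  | lab : Label → Letter
  | asgn : Var → Fn → List Var → Letter
  | pred : Pn → List Var → Bool → Letter
  deriving DecidableEq

/-- Symbols: function symbols, predicate symbols and labels. -/
inductive Sym : Type where
  | fn : Fn → Sym
  | pn : Pn → Sym
  | lab : Label → Sym
  deriving DecidableEq

/-- The list of occurrences of function symbols, predicate symbols and labels in a schema. -/
def Schema.syms : Schema → List Sym
  | .skip => []
  | .label l => [Sym.lab l]
  | .assign _ f _ => [Sym.fn f]
  | .seq S₁ S₂ => S₁.syms ++ S₂.syms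
  | .ite p _ S₁ S₂ => Sym.pn p :: (S₁.syms ++ S₂.syms)
  | .loop q _ T => Sym.pn q :: T.syms

/-- A schema is linear if no function symbol, predicate symbol or label occurs
    more than once in it. -/
def Schema.Linear (S : Schema) : Prop := S.syms.Nodup

/-- Π(S), the set of terminating paths through S. -/
inductive Paths : Schema → List Letter → Prop where
  | skip : Paths Schema.skip []
  | label (l : Label) : Paths (Schema.label l) [Letter.lab l]
  | assign (y : Var) (f : Fn) (xs : List Var) :
      Paths (Schema.assign y f xs) [Letter.asgn y f xs]
  | seq {S₁ S₂ w₁ w₂} : Paths S₁ w₁ → Paths S₂ w₂ → Paths (Schema.seq S₁ S₂) (w₁ ++ w₂)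
  | iteTrue {p xs S₁ S₂ w} : Paths S₁ w →
      Paths (Schema.ite p xs S₁ S₂) (Letter.pred p xs true :: w)
  | iteFalse {p xs S₁ S₂ w} : Paths S₂ w →
      Paths (Schema.ite p xs S₁ S₂) (Letter.pred p xs false :: w)
  | loopFalse (q : Pn) (xs : List Var) (T : Schema) :
      Paths (Schema.loop q xs T) [Letter.pred q xs false]
  | loopTrue {q xs T w ws} : Paths T w → Paths (Schema.loop q xs T) ws →
      Paths (Schema.loop q xs T) (Letter.pred q xs true :: (w ++ ws))

/-- ρ ∈ pre(Π(S)): ρ is a (finite) path through S.  (Every finite path through S,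
    including every finite prefix of an infinite path, is a prefix of a terminating path.) -/
def PathPrefix (S : Schema) (ρ : List Letter) : Prop := ∃ τ, Paths S τ ∧ ρ <+: τ

/-- `IsQuotient S' S`: S' is obtained from S by deleting zero or more statements. -/
inductive IsQuotient : Schema → Schema → Prop where
  | skip (S : Schema) : IsQuotient Schema.skip S
  | refl (S : Schema) : IsQuotient S S
  | seq {S₁' S₁ S₂' S₂} : IsQuotient S₁' S₁ → IsQuotient S₂' S₂ →
      IsQuotient (Schema.seq S₁' S₂') (Schema.seq S₁ S₂)
  | loop {q xs T' T} : IsQuotient T' T → IsQuotient (Schema.loop q xs T') (Schema.loop q xs T)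
  | ite {p xs T₁ S₁ T₂ S₂} : IsQuotient T₁ S₁ → IsQuotient T₂ S₂ →
      IsQuotient (Schema.ite p xs T₁ T₂) (Schema.ite p xs S₁ S₂)

/-- The symbol (function symbol, predicate symbol or label) of a letter. -/
def Letter.sym : Letter → Sym
  | .lab l => Sym.lab l
  | .asgn _ f _ => Sym.fn f
  | .pred p _ _ => Sym.pn p

/-- proj_{S'}(ρ): delete from ρ all letters whose function or predicate symbols,
    or labels, do not occur in S'. -/
def proj (S' : Schema) (ρ : List Letter) : List Letter :=
  ρ.filter (fun m => decide (m.sym ∈ S'.syms))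

/-- An interpretation over a domain D. -/
structure Interp (D : Type) where
  fn : Fn → List D → D
  pn : Pn → List D → Bool

/-- One execution step on (non-⊥) states; predicate letters and labels do not change the state. -/
def execLetter {D : Type} (i : Interp D) (d : Var → D) : Letter → (Var → D)
  | .asgn y f xs => Function.update d y (i.fn f (xs.map d))
  | _ => d

/-- M[schema(σ)]^i_d : the state after executing the assignments of the word σ from d. -/
def execWord {D : Type} (i : Interp D) (d : Var → D) (σ : List Letter) : Var → D :=
  σ.foldl (execLetter i) d

/-- ρ is consistent with (i,d): every predicate letter in ρ is evaluated by i in accordance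
    with the sequence of assignments preceding it. -/
def Consistent {D : Type} (i : Interp D) (d : Var → D) (ρ : List Letter) : Prop :=
  ∀ σ p xs Z, (σ ++ [Letter.pred p xs Z]) <+: ρ → i.pn p (xs.map (execWord i d σ)) = Z

/-- `ρ` is a finite prefix of the path π(S,i,d). -/
def PrefixOfPi {D : Type} (i : Interp D) (d : Var → D) (S : Schema) (ρ : List Letter) : Prop :=
  PathPrefix S ρ ∧ Consistent i d ρ

/-- The set of finite prefixes of π(S,i,d); this set determines the
    (possibly infinite) word π(S,i,d) uniquely. -/
def PiPrefixes {D : Type} (i : Interp D) (d : Var → D) (S : Schema) : Set (List Letter) :=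
  {ρ | PrefixOfPi i d S ρ}

open Classical in
/-- The final state M[S]^i_d; `none` represents ⊥ (non-termination). -/
noncomputable def finalState {D : Type} (i : Interp D) (d : Var → D) (S : Schema) :
    Option (Var → D) :=
  if h : ∃ ρ, Paths S ρ ∧ Consistent i d ρ then some (execWord i d h.choose) else none

/-- The Herbrand domain Term(F,V). -/
inductive Tm : Type where
  | var : Var → Tm
  | app : Fn → List Tm → Tm

/-- A Herbrand interpretation: function symbols act as term constructors. -/
def Interp.IsHerbrand (j : Interp Tm) : Prop := ∀ f ts, j.fn f ts = Tm.app f ts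

/-- The natural state e. -/
def natState : Var → Tm := Tm.var

/-- A fixed Herbrand interpretation (the predicate part is irrelevant for executing
    assignments). -/
def hInterp : Interp Tm := ⟨fun f ts => Tm.app f ts, fun _ _ => true⟩

/-- M[σ]_e : the Herbrand state after executing the assignments of σ from the natural state. -/
def hExec (σ : List Letter) : Var → Tm := execWord hInterp natState σ

/-- p(t) = Y is a consequence of μ. -/
def Consequence (μ : List Letter) (p : Pn) (ts : List Tm) (Y : Bool) : Prop :=
  ∃ μ' xs, (μ' ++ [Letter.pred p xs Y]) <+: μ ∧ xs.map (hExec μ') = ts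

/-- ρ is executable: ρ is a prefix of π(S,i,d) for some domain, interpretation and state. -/
def Executable (S : Schema) (ρ : List Letter) : Prop :=
  ∃ (D : Type) (i : Interp D) (d : Var → D), PrefixOfPi i d S ρ

/-- ρ (through S) and ρ' (through S') are compatible: for some domain, interpretation i
    and state d they are prefixes of π(S,i,d) and π(S',i,d) respectively. -/
def Compatible (S : Schema) (ρ : List Letter) (S' : Schema) (ρ' : List Letter) : Prop :=
  ∃ (D : Type) (i : Interp D) (d : Var → D), PrefixOfPi i d S ρ ∧ PrefixOfPi i d S' ρ'

/-- `Sub T S`: T occurs as a subschema of S. -/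
inductive Sub : Schema → Schema → Prop where
  | refl (S : Schema) : Sub S S
  | seqL {T S₁ S₂} : Sub T S₁ → Sub T (Schema.seq S₁ S₂)
  | seqR {T S₁ S₂} : Sub T S₂ → Sub T (Schema.seq S₁ S₂)
  | iteT {T p xs S₁ S₂} : Sub T S₁ → Sub T (Schema.ite p xs S₁ S₂)
  | iteF {T p xs S₁ S₂} : Sub T S₂ → Sub T (Schema.ite p xs S₁ S₂)
  | loop {T q xs B} : Sub T B → Sub T (Schema.loop q xs B)

/-- Simple l-reductions of paths through S. -/
inductive SimpleRed (S : Schema) (l : Label) : List Letter → List Letter → Prop where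
  | loopRed {p xs B σ α γ} :
      Sub (Schema.loop p xs B) S → Paths B σ → Sym.lab l ∉ B.syms →
      SimpleRed S l (α ++ [Letter.pred p xs true] ++ σ ++ [Letter.pred p xs false] ++ γ)
                    (α ++ [Letter.pred p xs false] ++ γ)
  | iteRed {p xs S₁ S₂ σ α γ} {Z : Bool} :
      Sub (Schema.ite p xs S₁ S₂) S → Paths (if Z then S₁ else S₂) σ →
      (if Z then S₂ else S₁) = Schema.skip →
      Sym.lab l ∉ S₁.syms → Sym.lab l ∉ S₂.syms →
      SimpleRed S l (α ++ [Letter.pred p xs Z] ++ σ ++ γ)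
                    (α ++ [Letter.pred p xs (!Z)] ++ γ)

/-- ρ is l-reducible to ρ': zero or more simple l-reductions. -/
def Reducible (S : Schema) (l : Label) : List Letter → List Letter → Prop :=
  Relation.ReflTransGen (SimpleRed S l)

/-- maxpre(σ,σ') : the maximal common prefix of two words. -/
def maxpre : List Letter → List Letter → List Letter
  | a :: as, b :: bs => if a = b then a :: maxpre as bs else []
  | _, _ => []

/-- The sequence of function and predicate symbols through which a path passes. -/
def symSeq (ρ : List Letter) : List Sym :=
  ρ.filterMap fun m => match m with
    | Letter.asgn _ f _ => some (Sym.fn f)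
    | Letter.pred p _ _ => some (Sym.pn p)
    | Letter.lab _ => none

/-- S' (a quotient of S containing l) is a (ρl,V)-path-faithful dynamic slice of S:
    (1) every variable of V defines the same term after proj_{S'}(ρ) as after ρ, and
    (2) every maximal path through S' compatible with ρ has proj_{S'}(ρ) as a prefix
        (equivalently: whenever ρ is a prefix of π(S,i,d), proj_{S'}(ρ) is a prefix
        of π(S',i,d)). -/
def IsPFDS (S : Schema) (ρ : List Letter) (l : Label) (V : Set Var) (S' : Schema) : Prop :=
  (∀ v ∈ V, hExec (proj S' ρ) v = hExec ρ v) ∧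
  ∀ (D : Type) (i : Interp D) (d : Var → D),
    PrefixOfPi i d S ρ → PrefixOfPi i d S' (proj S' ρ)

/-- S' (a quotient of S containing l) is a (ρl,V)-dynamic slice of S: every maximal path
    through S' compatible with ρ has a prefix ρ' to which proj_{S'}(ρ) is l-reducible and
    such that every variable of V defines the same term after ρ' as after ρ. -/
def IsDS (S : Schema) (ρ : List Letter) (l : Label) (V : Set Var) (S' : Schema) : Prop :=
  ∀ (D : Type) (i : Interp D) (d : Var → D), PrefixOfPi i d S ρ →
    ∃ ρ', PrefixOfPi i d S' ρ' ∧ Reducible S' l (proj S' ρ) ρ' ∧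
      ∀ v ∈ V, hExec ρ' v = hExec ρ v

/-- T' is a (ρ,V)-path-faithful dynamic end slice of T
    (S = T l with a label l at the end, S' = T' l). -/
def IsPFDSEnd (T : Schema) (ρ : List Letter) (V : Set Var) (T' : Schema) : Prop :=
  IsPFDS (Schema.seq T (Schema.label 0)) ρ 0 V (Schema.seq T' (Schema.label 0))

/-- T' is a (ρ,V)-dynamic end slice of T. -/
def IsDSEnd (T : Schema) (ρ : List Letter) (V : Set Var) (T' : Schema) : Prop :=
  IsDS (Schema.seq T (Schema.label 0)) ρ 0 V (Schema.seq T' (Schema.label 0))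

/-- The set of function and predicate symbols of a schema. -/
def fpsyms (T : Schema) : Set Sym := {s | s ∈ T.syms ∧ ∀ l : Label, s ≠ Sym.lab l}

/-- T is a minimal (ρ,V)-path-faithful dynamic end slice of S: it is a path-faithful
    dynamic end slice, and no quotient of S with a strictly smaller set of function and
    predicate symbols is a (ρ,V)-dynamic end slice of S. -/
def MinimalPFDSEnd (S : Schema) (ρ : List Letter) (V : Set Var) (T : Schema) : Prop :=
  IsPFDSEnd S ρ V T ∧
  ∀ T', IsQuotient T' S → fpsyms T' ⊂ fpsyms T → ¬ IsDSEnd S ρ V T'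

/- The schema of Figure 4 of the paper.
   Variables: v = 0, x = 1.
   Function symbols: g_good = 0, G_good = 1, g_bad = 2, G_bad = 3, g₁ = 4, g₂ = 5,
                     H = 6, J = 7.
   Predicate symbols: P = 0, Q = 1, q = 2, s₁ = 3, s₂ = 4, t = 5. -/

/-- if q(v) then { x := g_good(); v := G_good(x,v); }
             else { x := g_bad(); v := G_bad(x,v); } -/
def fig4Inner : Schema :=
  Schema.ite 2 [0]
    (Schema.seq (Schema.assign 1 0 []) (Schema.assign 0 1 [1, 0]))
    (Schema.seq (Schema.assign 1 2 []) (Schema.assign 0 3 [1, 0]))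

/-- if s₁(v) then x := g₁(); -/
def fig4S1If : Schema := Schema.ite 3 [0] (Schema.assign 1 4 []) Schema.skip
/-- if s₂(v) then x := g₂(); -/
def fig4S2If : Schema := Schema.ite 4 [0] (Schema.assign 1 5 []) Schema.skip
/-- if t(x) then v := H(v); -/
def fig4TIf : Schema := Schema.ite 5 [1] (Schema.assign 0 6 [0]) Schema.skip

/-- The Figure 4 schema, built from a given pair of middle if-statements. -/
def fig4With (s1 s2 : Schema) : Schema :=
  Schema.loop 0 [0]
    (Schema.seq
      (Schema.ite 1 [0]
        (Schema.seq fig4Inner (Schema.seq s1 (Schema.seq s2 fig4TIf)))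
        Schema.skip)
      (Schema.assign 0 7 [0]))

/-- The schema S of Figure 4. -/
def fig4S : Schema := fig4With fig4S1If fig4S2If
/-- S₁: S with the if statement guarded by s₂ deleted. -/
def fig4Sa : Schema := fig4With fig4S1If Schema.skip
/-- S₂: S with the if statement guarded by s₁ deleted. -/
def fig4Sb : Schema := fig4With Schema.skip fig4S2If

/-- ⟨q,true⟩⟨g_good⟩⟨G_good⟩ -/
def fig4Good : List Letter :=
  [Letter.pred 2 [0] true, Letter.asgn 1 0 [], Letter.asgn 0 1 [1, 0]]
/-- ⟨q,false⟩⟨g_bad⟩⟨G_bad⟩ -/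
def fig4Bad : List Letter :=
  [Letter.pred 2 [0] false, Letter.asgn 1 2 [], Letter.asgn 0 3 [1, 0]]
def fig4s1T : List Letter := [Letter.pred 3 [0] true, Letter.asgn 1 4 []]
def fig4s1F : List Letter := [Letter.pred 3 [0] false]
def fig4s2T : List Letter := [Letter.pred 4 [0] true, Letter.asgn 1 5 []]
def fig4s2F : List Letter := [Letter.pred 4 [0] false]
/-- ⟨t,true⟩⟨H⟩ -/
def fig4tT : List Letter := [Letter.pred 5 [1] true, Letter.asgn 0 6 [0]]
/-- ⟨J⟩ -/
def fig4J : List Letter := [Letter.asgn 0 7 [0]]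

/-- A pass of ρ through the body of P, entering the body of Q. -/
def fig4Pass (inner s1 s2 : List Letter) : List Letter :=
  [Letter.pred 0 [0] true, Letter.pred 1 [0] true] ++ inner ++ s1 ++ s2 ++ fig4tT ++ fig4J

/-- The path ρ of Section 5: it enters the body of P five times.
    1st: through g_good and H, not through either gᵢ.
    2nd: through g_good, g₁ and H, not g₂.
    3rd: through g_good, g₂ and H, not g₁.
    4th: through g_bad, g₁, g₂ and H.
    5th: through ⟨Q,false⟩. -/
def fig4Rho : List Letter :=
  fig4Pass fig4Good fig4s1F fig4s2F ++
  fig4Pass fig4Good fig4s1T fig4s2F ++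
  fig4Pass fig4Good fig4s1F fig4s2T ++
  fig4Pass fig4Bad fig4s1T fig4s2T ++
  ([Letter.pred 0 [0] true, Letter.pred 1 [0] false] ++ fig4J) ++
  [Letter.pred 0 [0] false]


/-! ### Auxiliary machinery -/

/-- Fuel-based counter of occurrences of a function symbol in a term
    (structural in the fuel, so it reduces in the kernel). -/
def cntF (f : Fn) (fuel : ℕ) : Tm → ℕ :=
  Nat.rec (motive := fun _ => Tm → ℕ) (fun _ => 0)
    (fun _ ih t => match t with
      | .var _ => 0
      | .app g ts => (if g = f then 1 else 0) + ts.foldl (fun acc t' => acc + ih t') 0)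
    fuel

/-- Occurrence of a function symbol in a term. -/
inductive OccFn (f : Fn) : Tm → Prop where
  | head : ∀ ts, OccFn f (.app f ts)
  | arg : ∀ g t ts, t ∈ ts → OccFn f t → OccFn f (.app g ts)

/-- Fuel-based occurrence check. -/
def occB (f : Fn) (fuel : ℕ) : Tm → Bool :=
  Nat.rec (motive := fun _ => Tm → Bool) (fun _ => false)
    (fun _ ih t => match t with
      | .var _ => false
      | .app g ts => g == f || ts.any ih)
    fuel

lemma occB_sound {f : Fn} : ∀ (fuel : ℕ) (t : Tm), occB f fuel t = true → OccFn f t := by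
  intro fuel
  induction fuel with
  | zero => intro t h; simp [occB] at h
  | succ n ih =>
      intro t h
      match t with
      | .var v => simp [occB] at h
      | .app g ts =>
          have h' : (g == f || ts.any (occB f n)) = true := h
          rcases Bool.or_eq_true_iff.1 h' with h1 | h2
          · have : g = f := by simpa using h1
            subst this; exact OccFn.head ts
          · obtain ⟨t', ht', ho⟩ := List.any_eq_true.1 h2
            exact OccFn.arg g t' ts ht' (ih t' ho)

/-- A fuel-based parser for `Paths`: `parse fuel S w = some r` means that
    `w = w' ++ r` for some terminating path `w'` through `S`. -/
def parse : ℕ → Schema → List Letter → Option (List Letter)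
  | 0, _, _ => none
  | (fuel+1), S, w =>
    match S, w with
    | .skip, w => some w
    | .label l, .lab l' :: w => if l = l' then some w else none
    | .assign y f xs, .asgn y' f' xs' :: w =>
        if y = y' ∧ f = f' ∧ xs = xs' then some w else none
    | .seq S₁ S₂, w => (parse fuel S₁ w).bind (fun m => parse fuel S₂ m)
    | .ite p xs S₁ S₂, .pred p' xs' Z :: w =>
        if p = p' ∧ xs = xs' then parse fuel (if Z then S₁ else S₂) w else none
    | .loop q xs T, .pred q' xs' Z :: w =>
        if q = q' ∧ xs = xs' then
          if Z then (parse fuel T w).bind (fun m => parse fuel (.loop q xs T) m)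
          else some w
        else none
    | _, _ => none

lemma parse_sound : ∀ (fuel : ℕ) (S : Schema) (w r : List Letter),
    parse fuel S w = some r → ∃ w', w = w' ++ r ∧ Paths S w' := by
  intro fuel
  induction fuel with
  | zero => intro S w r h; simp [parse] at h
  | succ n ih =>
      intro S w r h
      cases S with
      | skip =>
          simp [parse] at h; subst h; exact ⟨[], rfl, Paths.skip⟩
      | label l =>
          match w with
          | [] => simp [parse] at h
          | .lab l' :: w =>
              simp [parse] at h
              obtain ⟨rfl, rfl⟩ := h
              exact ⟨[.lab l], rfl, Paths.label l⟩
          | .asgn _ _ _ :: w => simp [parse] at h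
          | .pred _ _ _ :: w => simp [parse] at h
      | assign y f xs =>
          match w with
          | [] => simp [parse] at h
          | .asgn y' f' xs' :: w =>
              simp [parse] at h
              obtain ⟨⟨rfl, rfl, rfl⟩, rfl⟩ := h
              exact ⟨[.asgn y f xs], rfl, Paths.assign y f xs⟩
          | .lab _ :: w => simp [parse] at h
          | .pred _ _ _ :: w => simp [parse] at h
      | seq S₁ S₂ =>
          simp [parse, Option.bind_eq_some_iff] at h
          obtain ⟨m, h1, h2⟩ := h
          obtain ⟨w₁, rfl, hp1⟩ := ih S₁ w m h1
          obtain ⟨w₂, rfl, hp2⟩ := ih S₂ m r h2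
          exact ⟨w₁ ++ w₂, by simp, Paths.seq hp1 hp2⟩
      | ite p xs S₁ S₂ =>
          match w with
          | [] => simp [parse] at h
          | .pred p' xs' Z :: w =>
              simp [parse] at h
              obtain ⟨⟨rfl, rfl⟩, h⟩ := h
              cases Z with
              | true =>
                  obtain ⟨wb, rfl, hp⟩ := ih S₁ w r h
                  exact ⟨.pred p xs true :: wb, rfl, Paths.iteTrue hp⟩
              | false =>
                  obtain ⟨wb, rfl, hp⟩ := ih S₂ w r h
                  exact ⟨.pred p xs false :: wb, rfl, Paths.iteFalse hp⟩
          | .lab _ :: w => simp [parse] at h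
          | .asgn _ _ _ :: w => simp [parse] at h
      | loop q xs T =>
          match w with
          | [] => simp [parse] at h
          | .pred q' xs' Z :: w =>
              simp [parse] at h
              obtain ⟨⟨rfl, rfl⟩, h⟩ := h
              cases Z with
              | true =>
                  simp [Option.bind_eq_some_iff] at h
                  obtain ⟨m, h1, h2⟩ := h
                  obtain ⟨wb, rfl, hp1⟩ := ih T w m h1
                  obtain ⟨ws, rfl, hp2⟩ := ih (.loop q xs T) m r h2
                  exact ⟨.pred q xs true :: (wb ++ ws), by simp, Paths.loopTrue hp1 hp2⟩
              | false =>
                  simp at h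
                  subst h
                  exact ⟨[.pred q xs false], rfl, Paths.loopFalse q xs T⟩
          | .lab _ :: w => simp [parse] at h
          | .asgn _ _ _ :: w => simp [parse] at h

lemma paths_of_parse {S : Schema} {w : List Letter} (fuel : ℕ)
    (h : parse fuel S w = some []) : Paths S w := by
  obtain ⟨w', hw, hp⟩ := parse_sound fuel S w [] h
  simpa [hw] using hp

/-! ### Consistency machinery -/

variable {D : Type} {i : Interp D}

/-- Recursive (state-threading) form of `Consistent`. -/
def consP (i : Interp D) : (Var → D) → List Letter → Prop
  | _, [] => True
  | d, .lab _ :: r => consP i d r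
  | d, .asgn y f xs :: r => consP i (Function.update d y (i.fn f (xs.map d))) r
  | d, .pred p xs Z :: r => i.pn p (xs.map d) = Z ∧ consP i d r

lemma consistent_cons {d : Var → D} {m : Letter} {r : List Letter} :
    Consistent i d (m :: r) ↔
      ((∀ p xs Z, m = .pred p xs Z → i.pn p (xs.map d) = Z) ∧
        Consistent i (execLetter i d m) r) := by
  constructor
  · intro h
    refine ⟨fun p xs Z hm => ?_, fun σ p xs Z hσ => ?_⟩
    · subst hm; exact h [] p xs Z ⟨r, rfl⟩
    · have := h (m :: σ) p xs Z (by
        obtain ⟨t, ht⟩ := hσ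
        exact ⟨t, by simp [ht]⟩)
      simpa [execWord] using this
  · rintro ⟨h1, h2⟩ σ p xs Z hσ
    match σ with
    | [] =>
        obtain ⟨t, ht⟩ := hσ
        simp at ht
        exact h1 p xs Z ht.1.symm
    | a :: σ' =>
        obtain ⟨t, ht⟩ := hσ
        simp at ht
        obtain ⟨rfl, ht⟩ := ht
        have := h2 σ' p xs Z ⟨t, by simpa using ht⟩
        simpa [execWord] using this

lemma consistent_iff_consP {d : Var → D} {ρ : List Letter} :
    Consistent i d ρ ↔ consP i d ρ := by
  induction ρ generalizing d with
  | nil => simp [consP]; intro σ p xs Z h; obtain ⟨t, ht⟩ := h; simp at ht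
  | cons m r ih =>
      rw [consistent_cons, ih]
      cases m with
      | lab l => simp [consP, execLetter]
      | asgn y f xs => simp [consP, execLetter]
      | pred p xs Z => simp [consP, execLetter]

lemma consP_append {d : Var → D} {α β : List Letter} :
    consP i d (α ++ β) ↔ consP i d α ∧ consP i (execWord i d α) β := by
  induction α generalizing d with
  | nil => simp [consP, execWord]
  | cons m r ih =>
      cases m with
      | lab l => simpa [consP, execWord, execLetter] using ih
      | asgn y f xs => simpa [consP, execWord, execLetter] using ih
      | pred p xs Z =>
          show (i.pn p (xs.map d) = Z ∧ consP i d (r ++ β)) ↔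
            ((i.pn p (xs.map d) = Z ∧ consP i d r) ∧
              consP i (execWord i d (Letter.pred p xs Z :: r)) β)
          rw [ih, show execWord i d (Letter.pred p xs Z :: r) = execWord i d r from rfl]
          tauto

lemma consistent_append {d : Var → D} {α β : List Letter} :
    Consistent i d (α ++ β) ↔ Consistent i d α ∧ Consistent i (execWord i d α) β := by
  rw [consistent_iff_consP, consistent_iff_consP, consistent_iff_consP, consP_append]

lemma consistent_of_prefix {d : Var → D} {ρ ρ' : List Letter}
    (h : ρ' <+: ρ) (hc : Consistent i d ρ) : Consistent i d ρ' := by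
  obtain ⟨t, rfl⟩ := h
  exact (consistent_append.1 hc).1

lemma consistent_pred_cons {d : Var → D} {p xs Z} {r : List Letter}
    (h : Consistent i d (.pred p xs Z :: r)) :
    i.pn p (xs.map d) = Z ∧ Consistent i d r := by
  rw [consistent_iff_consP] at h ⊢
  exact ⟨h.1, h.2⟩

/-- Boolean consistency check. -/
def consB (i : Interp D) : (Var → D) → List Letter → Bool
  | _, [] => true
  | d, .lab _ :: r => consB i d r
  | d, .asgn y f xs :: r => consB i (Function.update d y (i.fn f (xs.map d))) r
  | d, .pred p xs Z :: r => (i.pn p (xs.map d) == Z) && consB i d r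

lemma consistent_of_consB {d : Var → D} {ρ : List Letter}
    (h : consB i d ρ = true) : Consistent i d ρ := by
  rw [consistent_iff_consP]
  induction ρ generalizing d with
  | nil => trivial
  | cons m r ih =>
      cases m with
      | lab l => exact ih h
      | asgn y f xs => exact ih h
      | pred p xs Z =>
          have h' := h
          simp only [consB, Bool.and_eq_true, beq_iff_eq] at h'
          exact ⟨h'.1, ih h'.2⟩

/-! ### Determinism of consistent paths -/

lemma prefix_append_cases {α : Type} : ∀ {a : List α} {l b : List α}, l <+: a ++ b →
    l <+: a ∨ ∃ l', l = a ++ l' ∧ l' <+: b := by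
  intro a
  induction a with
  | nil => intro l b h; exact Or.inr ⟨l, rfl, h⟩
  | cons x as ih =>
      intro l b h
      match l with
      | [] => exact Or.inl (List.nil_prefix)
      | y :: l' =>
          rw [List.cons_append, List.cons_prefix_cons] at h
          obtain ⟨rfl, h⟩ := h
          rcases ih h with h' | ⟨l'', rfl, h''⟩
          · exact Or.inl (List.cons_prefix_cons.2 ⟨rfl, h'⟩)
          · exact Or.inr ⟨l'', rfl, h''⟩

/-- Uniqueness of consistent terminating paths. -/
lemma paths_unique : ∀ {S : Schema} {τ₁ : List Letter}, Paths S τ₁ →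
    ∀ {τ₂ : List Letter} {d : Var → D}, Paths S τ₂ →
    Consistent i d τ₁ → Consistent i d τ₂ → τ₁ = τ₂ := by
  intro S τ₁ h₁
  induction h₁ with
  | skip => intro τ₂ d h₂ _ _; cases h₂; rfl
  | label l => intro τ₂ d h₂ _ _; cases h₂; rfl
  | assign y f xs => intro τ₂ d h₂ _ _; cases h₂; rfl
  | seq hp1 hp2 ih1 ih2 =>
      intro τ₂ d h₂ hc1 hc2
      cases h₂ with
      | seq hq1 hq2 =>
          rename_i w₁ w₂ u₁ u₂
          have e1 : w₁ = u₁ :=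
            ih1 hq1 (consistent_append.1 hc1).1 (consistent_append.1 hc2).1
          subst e1
          have e2 : w₂ = u₂ :=
            ih2 hq2 (consistent_append.1 hc1).2 (consistent_append.1 hc2).2
          rw [e2]
  | iteTrue hp ih =>
      intro τ₂ d h₂ hc1 hc2
      cases h₂ with
      | iteTrue hq =>
          have := ih hq (consistent_pred_cons hc1).2 (consistent_pred_cons hc2).2
          rw [this]
      | iteFalse hq =>
          have e1 := (consistent_pred_cons hc1).1
          have e2 := (consistent_pred_cons hc2).1
          rw [e1] at e2; exact absurd e2 (by simp)
  | iteFalse hp ih =>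
      intro τ₂ d h₂ hc1 hc2
      cases h₂ with
      | iteFalse hq =>
          have := ih hq (consistent_pred_cons hc1).2 (consistent_pred_cons hc2).2
          rw [this]
      | iteTrue hq =>
          have e1 := (consistent_pred_cons hc1).1
          have e2 := (consistent_pred_cons hc2).1
          rw [e1] at e2; exact absurd e2 (by simp)
  | loopFalse q xs T =>
      intro τ₂ d h₂ hc1 hc2
      cases h₂ with
      | loopFalse => rfl
      | loopTrue hq1 hq2 =>
          have e1 := (consistent_pred_cons hc1).1
          have e2 := (consistent_pred_cons hc2).1
          rw [e1] at e2; exact absurd e2 (by simp)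
  | loopTrue hp1 hp2 ih1 ih2 =>
      intro τ₂ d h₂ hc1 hc2
      cases h₂ with
      | loopFalse =>
          have e1 := (consistent_pred_cons hc1).1
          have e2 := (consistent_pred_cons hc2).1
          rw [e1] at e2; exact absurd e2 (by simp)
      | loopTrue hq1 hq2 =>
          rename_i w ws u us
          have hc1' := (consistent_pred_cons hc1).2
          have hc2' := (consistent_pred_cons hc2).2
          have e1 : w = u :=
            ih1 hq1 (consistent_append.1 hc1').1 (consistent_append.1 hc2').1
          subst e1
          have e2 : ws = us :=
            ih2 hq2 (consistent_append.1 hc1').2 (consistent_append.1 hc2').2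
          rw [e2]

/-- Any consistent path prefix is a prefix of the consistent terminating path. -/
lemma prefix_of_run : ∀ {S : Schema} {τ₂ : List Letter}, Paths S τ₂ →
    ∀ {ρ' τ : List Letter} {d : Var → D}, ρ' <+: τ₂ → Consistent i d ρ' →
    Paths S τ → Consistent i d τ → ρ' <+: τ := by
  intro S τ₂ h₂
  induction h₂ with
  | skip =>
      intro ρ' τ d hpre _ hτ _
      rw [List.prefix_nil] at hpre; subst hpre; exact List.nil_prefix
  | label l =>
      intro ρ' τ d hpre _ hτ _; cases hτ; exact hpre
  | assign y f xs =>
      intro ρ' τ d hpre _ hτ _; cases hτ; exact hpre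
  | seq hp1 hp2 ih1 ih2 =>
      intro ρ' τ d hpre hc' hτ hcτ
      cases hτ with
      | seq hq1 hq2 =>
          rcases prefix_append_cases hpre with h | ⟨ρ₂, rfl, h⟩
          · exact (ih1 h hc' hq1 (consistent_append.1 hcτ).1).trans
              (List.prefix_append _ _)
          · have e1 := paths_unique hp1 hq1 (consistent_append.1 hc').1
              (consistent_append.1 hcτ).1
            subst e1
            have h2 := ih2 h (consistent_append.1 hc').2 hq2 (consistent_append.1 hcτ).2
            obtain ⟨t, rfl⟩ := h2
            exact ⟨t, by simp⟩
  | iteTrue hp ih =>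
      intro ρ' τ d hpre hc' hτ hcτ
      match ρ', hpre with
      | [], _ => exact List.nil_prefix
      | m :: ρ₂, hpre =>
          rw [List.cons_prefix_cons] at hpre
          obtain ⟨rfl, hpre⟩ := hpre
          have e1 := (consistent_pred_cons hc').1
          cases hτ with
          | iteTrue hq =>
              exact List.cons_prefix_cons.2
                ⟨rfl, ih hpre (consistent_pred_cons hc').2 hq (consistent_pred_cons hcτ).2⟩
          | iteFalse hq =>
              have e2 := (consistent_pred_cons hcτ).1
              rw [e1] at e2; exact absurd e2 (by simp)
  | iteFalse hp ih =>
      intro ρ' τ d hpre hc' hτ hcτ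
      match ρ', hpre with
      | [], _ => exact List.nil_prefix
      | m :: ρ₂, hpre =>
          rw [List.cons_prefix_cons] at hpre
          obtain ⟨rfl, hpre⟩ := hpre
          have e1 := (consistent_pred_cons hc').1
          cases hτ with
          | iteFalse hq =>
              exact List.cons_prefix_cons.2
                ⟨rfl, ih hpre (consistent_pred_cons hc').2 hq (consistent_pred_cons hcτ).2⟩
          | iteTrue hq =>
              have e2 := (consistent_pred_cons hcτ).1
              rw [e1] at e2; exact absurd e2 (by simp)
  | loopFalse q xs T =>
      intro ρ' τ d hpre hc' hτ hcτ
      match ρ', hpre with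
      | [], _ => exact List.nil_prefix
      | m :: ρ₂, hpre =>
          rw [List.cons_prefix_cons] at hpre
          obtain ⟨rfl, hpre⟩ := hpre
          have e1 := (consistent_pred_cons hc').1
          cases hτ with
          | loopFalse =>
              rw [List.prefix_nil] at hpre; subst hpre
              exact List.cons_prefix_cons.2 ⟨rfl, List.nil_prefix⟩
          | loopTrue hq1 hq2 =>
              have e2 := (consistent_pred_cons hcτ).1
              rw [e1] at e2; exact absurd e2 (by simp)
  | loopTrue hp1 hp2 ih1 ih2 =>
      intro ρ' τ d hpre hc' hτ hcτ
      match ρ', hpre with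
      | [], _ => exact List.nil_prefix
      | m :: ρ₂, hpre =>
          rw [List.cons_prefix_cons] at hpre
          obtain ⟨rfl, hpre⟩ := hpre
          have e1 := (consistent_pred_cons hc').1
          cases hτ with
          | loopFalse =>
              have e2 := (consistent_pred_cons hcτ).1
              rw [e1] at e2; exact absurd e2 (by simp)
          | loopTrue hq1 hq2 =>
              have hc'' := (consistent_pred_cons hc').2
              have hcτ' := (consistent_pred_cons hcτ).2
              rcases prefix_append_cases hpre with h | ⟨ρ₃, rfl, h⟩
              · exact List.cons_prefix_cons.2 ⟨rfl,
                  (ih1 h hc'' hq1 (consistent_append.1 hcτ').1).trans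
                    (List.prefix_append _ _)⟩
              · have e2 := paths_unique hp1 hq1 (consistent_append.1 hc'').1
                  (consistent_append.1 hcτ').1
                subst e2
                have h3 := ih2 h (consistent_append.1 hc'').2 hq2 (consistent_append.1 hcτ').2
                obtain ⟨t, rfl⟩ := h3
                exact List.cons_prefix_cons.2 ⟨rfl, ⟨t, by simp⟩⟩

/-! ### Symbols of paths and quotients -/

lemma paths_mem_syms : ∀ {S : Schema} {τ : List Letter}, Paths S τ →
    ∀ m ∈ τ, m.sym ∈ S.syms := by
  intro S τ h
  induction h with
  | skip => intro m hm; simp at hm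
  | label l => intro m hm; simp at hm; subst hm; simp [Schema.syms, Letter.sym]
  | assign y f xs => intro m hm; simp at hm; subst hm; simp [Schema.syms, Letter.sym]
  | seq h1 h2 ih1 ih2 =>
      intro m hm
      simp [Schema.syms]
      rcases List.mem_append.1 hm with h | h
      · exact Or.inl (ih1 m h)
      · exact Or.inr (ih2 m h)
  | iteTrue h ih =>
      intro m hm
      simp [Schema.syms]
      rcases List.mem_cons.1 hm with rfl | h
      · left; simp [Letter.sym]
      · right; exact Or.inl (ih m h)
  | iteFalse h ih =>
      intro m hm
      simp [Schema.syms]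
      rcases List.mem_cons.1 hm with rfl | h
      · left; simp [Letter.sym]
      · right; exact Or.inr (ih m h)
  | loopFalse q xs T =>
      intro m hm
      simp at hm; subst hm; simp [Schema.syms, Letter.sym]
  | loopTrue h1 h2 ih1 ih2 =>
      intro m hm
      simp [Schema.syms]
      rcases List.mem_cons.1 hm with rfl | h
      · left; simp [Letter.sym]
      · rcases List.mem_append.1 h with h | h
        · right; exact ih1 m h
        · have := ih2 m h
          simpa [Schema.syms] using this

lemma quotient_syms_subset : ∀ {T S : Schema}, IsQuotient T S →
    ∀ s ∈ T.syms, s ∈ S.syms := by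
  intro T S h
  induction h with
  | skip S => intro s hs; simp [Schema.syms] at hs
  | refl S => intro s hs; exact hs
  | seq h1 h2 ih1 ih2 =>
      intro s hs
      simp [Schema.syms] at hs ⊢
      rcases hs with h | h
      · exact Or.inl (ih1 s h)
      · exact Or.inr (ih2 s h)
  | loop h ih =>
      intro s hs
      simp [Schema.syms] at hs ⊢
      rcases hs with h | h
      · exact Or.inl h
      · exact Or.inr (ih s h)
  | ite h1 h2 ih1 ih2 =>
      intro s hs
      simp [Schema.syms] at hs ⊢
      rcases hs with h | h | h
      · exact Or.inl h
      · exact Or.inr (Or.inl (ih1 s h))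
      · exact Or.inr (Or.inr (ih2 s h))

lemma quotient_skip {T : Schema} (h : IsQuotient T .skip) : T = .skip := by
  cases h <;> rfl

lemma quotient_assign {T : Schema} {y f xs} (h : IsQuotient T (.assign y f xs)) :
    T = .skip ∨ T = .assign y f xs := by
  cases h
  · exact Or.inl rfl
  · exact Or.inr rfl

lemma quotient_seq {T A B : Schema} (h : IsQuotient T (.seq A B)) :
    T = .skip ∨ ∃ A' B', T = .seq A' B' ∧ IsQuotient A' A ∧ IsQuotient B' B := by
  cases h with
  | skip => exact Or.inl rfl
  | refl => exact Or.inr ⟨A, B, rfl, .refl A, .refl B⟩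
  | seq h1 h2 => exact Or.inr ⟨_, _, rfl, h1, h2⟩

lemma quotient_ite {T A B : Schema} {p xs} (h : IsQuotient T (.ite p xs A B)) :
    T = .skip ∨ ∃ A' B', T = .ite p xs A' B' ∧ IsQuotient A' A ∧ IsQuotient B' B := by
  cases h with
  | skip => exact Or.inl rfl
  | refl => exact Or.inr ⟨A, B, rfl, .refl A, .refl B⟩
  | ite h1 h2 => exact Or.inr ⟨_, _, rfl, h1, h2⟩

lemma quotient_loop {T B : Schema} {q xs} (h : IsQuotient T (.loop q xs B)) :
    T = .skip ∨ ∃ B', T = .loop q xs B' ∧ IsQuotient B' B := by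
  cases h with
  | skip => exact Or.inl rfl
  | refl => exact Or.inr ⟨B, rfl, .refl B⟩
  | loop h1 => exact Or.inr ⟨_, rfl, h1⟩

/-! ### Occurrences of function symbols under Herbrand execution -/

lemma occ_exec {f : Fn} : ∀ (σ : List Letter) (d : Var → Tm),
    (∀ u, ¬ OccFn f (d u)) → (∀ y xs, Letter.asgn y f xs ∉ σ) →
    ∀ v, ¬ OccFn f (execWord hInterp d σ v) := by
  intro σ
  induction σ with
  | nil => intro d hd _ v; exact hd v
  | cons m r ih =>
      intro d hd hm v
      have hm' : ∀ y xs, Letter.asgn y f xs ∉ r := by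
        intro y xs hc
        exact hm y xs (List.mem_cons_of_mem _ hc)
      have step : ∀ u, ¬ OccFn f (execLetter hInterp d m u) := by
        intro u
        cases m with
        | lab l => exact hd u
        | pred p xs Z => exact hd u
        | asgn y g xs =>
            simp only [execLetter]
            rcases eq_or_ne u y with rfl | hne
            · rw [Function.update_self]
              intro hocc
              cases hocc with
              | head ts => exact hm u xs (by simp)
              | arg g t ts ht hot =>
                  obtain ⟨x, _, rfl⟩ := List.mem_map.1 ht
                  exact hd x hot
            · rw [Function.update_of_ne hne]; exact hd u
      exact ih (execLetter hInterp d m) step hm' v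

/-! ### A concrete interpretation making ρ executable -/

/-- Predicate letter evaluation used by the adversarial interpretation: most
    predicates look only at the number of occurrences of `J` (fn 7) in the value
    of `v`; `t` (pn 5) is true on all constant applications except `g_bad` (fn 2). -/
def myPn : Pn → List Tm → Bool
  | 0, [u] => cntF 7 30 u < 5
  | 1, [u] => cntF 7 30 u < 4
  | 2, [u] => cntF 7 30 u < 3
  | 3, [u] => cntF 7 30 u % 2 == 1
  | 4, [u] => 2 ≤ cntF 7 30 u
  | 5, [u] => match u with
      | .app 2 _ => false
      | .app _ _ => true
      | .var _ => false
  | _, _ => false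

def myInterp : Interp Tm := ⟨fun f ts => Tm.app f ts, myPn⟩

/-- The quotient of `fig4S` with both middle if-statements deleted. -/
def qT0 : Schema := fig4With .skip .skip
/-- The quotient with the s₁-if reduced to `if s₁(v) then skip`. -/
def qT1 : Schema := fig4With (.ite 3 [0] .skip .skip) .skip
/-- The quotient with the s₂-if reduced to `if s₂(v) then skip`. -/
def qT1' : Schema := fig4With .skip (.ite 4 [0] .skip .skip)

/-- A generalized pass through the body of P. -/
def pass' (inner s1 s2 t : List Letter) : List Letter :=
  [Letter.pred 0 [0] true, Letter.pred 1 [0] true] ++ inner ++ s1 ++ s2 ++ t ++ fig4J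

def rhoTail : List Letter :=
  [Letter.pred 0 [0] true, Letter.pred 1 [0] false] ++ fig4J ++ [Letter.pred 0 [0] false]

/-- proj of ρ onto `fig4Sa` (with the end label). -/
def muA : List Letter :=
  pass' fig4Good fig4s1F [] fig4tT ++
  pass' fig4Good fig4s1T [] fig4tT ++
  pass' fig4Good fig4s1F [] fig4tT ++
  pass' fig4Bad fig4s1T [] fig4tT ++ rhoTail

/-- proj of ρ onto `fig4Sb` (with the end label). -/
def muB : List Letter :=
  pass' fig4Good [] fig4s2F fig4tT ++
  pass' fig4Good [] fig4s2F fig4tT ++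
  pass' fig4Good [] fig4s2T fig4tT ++
  pass' fig4Bad [] fig4s2T fig4tT ++ rhoTail

/-- The run of `qT0` (with end label) under `myInterp` from the natural state. -/
def tau0 : List Letter :=
  pass' fig4Good [] [] fig4tT ++
  pass' fig4Good [] [] fig4tT ++
  pass' fig4Good [] [] fig4tT ++
  pass' fig4Bad [] [] [Letter.pred 5 [1] false] ++ rhoTail ++ [Letter.lab 0]

def tau1 : List Letter :=
  pass' fig4Good [Letter.pred 3 [0] false] [] fig4tT ++
  pass' fig4Good [Letter.pred 3 [0] true] [] fig4tT ++
  pass' fig4Good [Letter.pred 3 [0] false] [] fig4tT ++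
  pass' fig4Bad [Letter.pred 3 [0] true] [] [Letter.pred 5 [1] false] ++ rhoTail ++
  [Letter.lab 0]

def tau1' : List Letter :=
  pass' fig4Good [] [Letter.pred 4 [0] false] fig4tT ++
  pass' fig4Good [] [Letter.pred 4 [0] false] fig4tT ++
  pass' fig4Good [] [Letter.pred 4 [0] true] fig4tT ++
  pass' fig4Bad [] [Letter.pred 4 [0] true] [Letter.pred 5 [1] false] ++ rhoTail ++
  [Letter.lab 0]


/-- Fuel-based boolean equality test on terms. -/
def beqTm (fuel : ℕ) : Tm → Tm → Bool :=
  Nat.rec (motive := fun _ => Tm → Tm → Bool) (fun _ _ => false)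
    (fun _ ih a b => match a, b with
      | .var u, .var v => u == v
      | .app f ts, .app g us =>
          f == g && (ts.length == us.length) && (ts.zip us).all (fun p => ih p.1 p.2)
      | _, _ => false) fuel

lemma list_eq_of_zip {α : Type} : ∀ (ts us : List α), ts.length = us.length →
    (∀ p ∈ ts.zip us, p.1 = p.2) → ts = us := by
  intro ts
  induction ts with
  | nil =>
      intro us h _
      cases us with
      | nil => rfl
      | cons b us => simp at h
  | cons a ts ih =>
      intro us h hz
      cases us with
      | nil => simp at h
      | cons b us =>
          have h1 : a = b := hz (a, b) (by simp [List.zip])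
          have h2 : ts = us := ih us (by simpa using h)
            (fun p hp => hz p (by simp only [List.zip_cons_cons, List.mem_cons]; exact Or.inr hp))
          rw [h1, h2]

lemma beqTm_correct : ∀ (fuel : ℕ) (a b : Tm), beqTm fuel a b = true → a = b := by
  intro fuel
  induction fuel with
  | zero => intro a b h; simp [beqTm] at h
  | succ n ih =>
      intro a b h
      match a, b with
      | .var u, .var v => have : u = v := by simpa [beqTm] using h
                          rw [this]
      | .var u, .app g us => simp [beqTm] at h
      | .app f ts, .var v => simp [beqTm] at h
      | .app f ts, .app g us =>
          have h' : (f == g && (ts.length == us.length) && (ts.zip us).all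
              (fun p => beqTm n p.1 p.2)) = true := h
          simp only [Bool.and_eq_true, beq_iff_eq, List.all_eq_true] at h'
          obtain ⟨⟨rfl, hlen⟩, hall⟩ := h'
          have : ts = us := list_eq_of_zip ts us hlen (fun p hp => ih p.1 p.2 (hall p hp))
          rw [this]

lemma hExec_muA : hExec muA 0 = hExec fig4Rho 0 :=
  beqTm_correct 30 _ _ (by decide)
lemma hExec_muB : hExec muB 0 = hExec fig4Rho 0 :=
  beqTm_correct 30 _ _ (by decide)

-- concrete decide facts
example : (fig4S.syms).Nodup := by decide
example : parse 200 fig4S fig4Rho = some [] := by decide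
example : parse 200 (Schema.seq fig4S (Schema.label 0)) (fig4Rho ++ [Letter.lab 0]) = some [] := by decide
example : consB myInterp natState fig4Rho = true := by decide
example : proj (Schema.seq fig4Sa (Schema.label 0)) fig4Rho = muA := by decide
example : proj (Schema.seq fig4Sb (Schema.label 0)) fig4Rho = muB := by decide
example : parse 200 (Schema.seq fig4Sa (Schema.label 0)) (muA ++ [Letter.lab 0]) = some [] := by decide
example : parse 200 (Schema.seq fig4Sb (Schema.label 0)) (muB ++ [Letter.lab 0]) = some [] := by decide
example : parse 200 (Schema.seq qT0 (Schema.label 0)) tau0 = some [] := by decide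
example : parse 200 (Schema.seq qT1 (Schema.label 0)) tau1 = some [] := by decide
example : parse 200 (Schema.seq qT1' (Schema.label 0)) tau1' = some [] := by decide
example : consB myInterp natState tau0 = true := by decide
example : consB myInterp natState tau1 = true := by decide
example : consB myInterp natState tau1' = true := by decide
example : tau0.inits.all (fun s => cntF 6 30 (hExec s 0) ≤ 3) = true := by decide
example : tau1.inits.all (fun s => cntF 6 30 (hExec s 0) ≤ 3) = true := by decide
example : tau1'.inits.all (fun s => cntF 6 30 (hExec s 0) ≤ 3) = true := by decide
example : cntF 6 30 (hExec fig4Rho 0) = 4 := by decide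
example : occB 0 30 (hExec fig4Rho 0) = true := by decide
example : occB 7 30 (hExec fig4Rho 0) = true := by decide
example : fig4Sa ≠ fig4Sb := by decide

lemma transferA {D : Type} (i : Interp D) (d : Var → D)
    (h : Consistent i d fig4Rho) : Consistent i d muA := by
  rw [consistent_iff_consP] at h ⊢
  simp only [fig4Rho, muA, fig4Pass, pass', fig4Good, fig4Bad, fig4s1T, fig4s1F,
    fig4s2T, fig4s2F, fig4tT, fig4J, rhoTail, List.append_assoc, List.cons_append,
    List.nil_append] at h ⊢
  simp only [consP, List.map_cons, List.map_nil, Function.update_apply] at h ⊢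
  simp only [show ((0:ℕ) = 1) = False by simp, show ((1:ℕ) = 0) = False by simp,
    if_true, if_false, ite_true, ite_false, reduceIte] at h ⊢
  tauto

lemma transferB {D : Type} (i : Interp D) (d : Var → D)
    (h : Consistent i d fig4Rho) : Consistent i d muB := by
  rw [consistent_iff_consP] at h ⊢
  simp only [fig4Rho, muB, fig4Pass, pass', fig4Good, fig4Bad, fig4s1T, fig4s1F,
    fig4s2T, fig4s2F, fig4tT, fig4J, rhoTail, List.append_assoc, List.cons_append,
    List.nil_append] at h ⊢
  simp only [consP, List.map_cons, List.map_nil, Function.update_apply] at h ⊢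
  simp only [show ((0:ℕ) = 1) = False by simp, show ((1:ℕ) = 0) = False by simp,
    if_true, if_false, ite_true, ite_false, reduceIte] at h ⊢
  tauto

/-- Classification of quotients of `fig4S` that retain all of
    g_good, G_good, g_bad, G_bad, H, J but not s₂. -/
lemma decompA {T' : Schema} (hq : IsQuotient T' fig4S)
    (h0 : Sym.fn 0 ∈ T'.syms) (h1 : Sym.fn 1 ∈ T'.syms) (h2 : Sym.fn 2 ∈ T'.syms)
    (h3 : Sym.fn 3 ∈ T'.syms) (h6 : Sym.fn 6 ∈ T'.syms) (h7 : Sym.fn 7 ∈ T'.syms)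
    (hp4 : Sym.pn 4 ∉ T'.syms) :
    T' = qT0 ∨ T' = qT1 ∨ T' = fig4Sa := by
  rw [show fig4S = Schema.loop 0 [0] (Schema.seq (Schema.ite 1 [0]
      (Schema.seq fig4Inner (Schema.seq fig4S1If (Schema.seq fig4S2If fig4TIf)))
      Schema.skip) (Schema.assign 0 7 [0])) from rfl] at hq
  rcases quotient_loop hq with rfl | ⟨B, rfl, hB⟩
  · exact absurd h7 (by decide)
  rcases quotient_seq hB with rfl | ⟨C, J, rfl, hC, hJ⟩
  · exact absurd h7 (by decide)
  rcases quotient_assign hJ with rfl | rfl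
  · simp only [Schema.syms, List.mem_cons, List.mem_append] at h7
    simp at h7
    exact absurd (quotient_syms_subset hC _ h7) (by decide)
  rcases quotient_ite hC with rfl | ⟨Br, Sk, rfl, hBr, hSk⟩
  · simp [Schema.syms] at h0
  have := quotient_skip hSk; subst this
  rcases quotient_seq hBr with rfl | ⟨I, R, rfl, hI, hR⟩
  · simp [Schema.syms] at h0
  -- localize memberships
  simp only [Schema.syms, List.mem_cons, List.mem_append] at h0 h1 h2 h3 h6
  simp at h0 h1 h2 h3 h6
  have hRs := quotient_syms_subset hR
  have hIs := quotient_syms_subset hI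
  have h0' : Sym.fn 0 ∈ I.syms := by
    rcases h0 with h | h
    · exact h
    · exact absurd (hRs _ h) (by decide)
  have h1' : Sym.fn 1 ∈ I.syms := by
    rcases h1 with h | h
    · exact h
    · exact absurd (hRs _ h) (by decide)
  have h2' : Sym.fn 2 ∈ I.syms := by
    rcases h2 with h | h
    · exact h
    · exact absurd (hRs _ h) (by decide)
  have h3' : Sym.fn 3 ∈ I.syms := by
    rcases h3 with h | h
    · exact h
    · exact absurd (hRs _ h) (by decide)
  have h6' : Sym.fn 6 ∈ R.syms := by
    rcases h6 with h | h
    · exact absurd (hIs _ h) (by decide)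
    · exact h
  clear h0 h1 h2 h3 h6 h7 hq hB hC hBr hRs hIs
  -- decompose the inner if
  rw [show fig4Inner = Schema.ite 2 [0]
      (Schema.seq (Schema.assign 1 0 []) (Schema.assign 0 1 [1, 0]))
      (Schema.seq (Schema.assign 1 2 []) (Schema.assign 0 3 [1, 0])) from rfl] at hI
  rcases quotient_ite hI with rfl | ⟨I1, I2, rfl, hI1, hI2⟩
  · simp [Schema.syms] at h0'
  simp only [Schema.syms, List.mem_cons, List.mem_append] at h0' h1' h2' h3'
  simp at h0' h1' h2' h3'
  have hI1s := quotient_syms_subset hI1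
  have hI2s := quotient_syms_subset hI2
  have h0'' : Sym.fn 0 ∈ I1.syms := by
    rcases h0' with h | h
    · exact h
    · exact absurd (hI2s _ h) (by decide)
  have h1'' : Sym.fn 1 ∈ I1.syms := by
    rcases h1' with h | h
    · exact h
    · exact absurd (hI2s _ h) (by decide)
  have h2'' : Sym.fn 2 ∈ I2.syms := by
    rcases h2' with h | h
    · exact absurd (hI1s _ h) (by decide)
    · exact h
  have h3'' : Sym.fn 3 ∈ I2.syms := by
    rcases h3' with h | h
    · exact absurd (hI1s _ h) (by decide)
    · exact h
  rcases quotient_seq hI1 with rfl | ⟨a1, a2, rfl, ha1, ha2⟩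
  · simp [Schema.syms] at h0''
  rcases quotient_assign ha1 with rfl | rfl
  · simp only [Schema.syms, List.mem_append, List.nil_append] at h0''
    exact absurd (quotient_syms_subset ha2 _ h0'') (by decide)
  rcases quotient_assign ha2 with rfl | rfl
  · simp [Schema.syms] at h1''
  rcases quotient_seq hI2 with rfl | ⟨a3, a4, rfl, ha3, ha4⟩
  · simp [Schema.syms] at h2''
  rcases quotient_assign ha3 with rfl | rfl
  · simp only [Schema.syms, List.mem_append, List.nil_append] at h2''
    exact absurd (quotient_syms_subset ha4 _ h2'') (by decide)
  rcases quotient_assign ha4 with rfl | rfl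
  · simp [Schema.syms] at h3''
  -- decompose the rest:  seq fig4S1If (seq fig4S2If fig4TIf)
  rcases quotient_seq hR with rfl | ⟨S1s, R2, rfl, hS1, hR2⟩
  · simp [Schema.syms] at h6'
  simp only [Schema.syms, List.mem_cons, List.mem_append] at h6'
  have hS1s := quotient_syms_subset hS1
  have h6a : Sym.fn 6 ∈ R2.syms := by
    rcases h6' with h | h
    · exact absurd (hS1s _ h) (by decide)
    · exact h
  rcases quotient_seq hR2 with rfl | ⟨S2s, Ts, rfl, hS2, hT⟩
  · simp [Schema.syms] at h6a
  simp only [Schema.syms, List.mem_cons, List.mem_append] at h6a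
  have hS2s := quotient_syms_subset hS2
  have h6b : Sym.fn 6 ∈ Ts.syms := by
    rcases h6a with h | h
    · exact absurd (hS2s _ h) (by decide)
    · exact h
  -- the t-if is fully retained
  rw [show fig4TIf = Schema.ite 5 [1] (Schema.assign 0 6 [0]) Schema.skip from rfl] at hT
  rcases quotient_ite hT with rfl | ⟨ta, tb, rfl, hta, htb⟩
  · simp [Schema.syms] at h6b
  have := quotient_skip htb; subst this
  rcases quotient_assign hta with rfl | rfl
  · simp [Schema.syms] at h6b
  -- the s₂-if is deleted
  rw [show fig4S2If = Schema.ite 4 [0] (Schema.assign 1 5 []) Schema.skip from rfl] at hS2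
  rcases quotient_ite hS2 with rfl | ⟨sa, sb, rfl, _, _⟩
  swap
  · exact absurd (by simp [Schema.syms]) hp4
  -- the s₁-if: three possibilities
  rw [show fig4S1If = Schema.ite 3 [0] (Schema.assign 1 4 []) Schema.skip from rfl] at hS1
  rcases quotient_ite hS1 with rfl | ⟨sa, sb, rfl, hsa, hsb⟩
  · exact Or.inl (by decide)
  have := quotient_skip hsb; subst this
  rcases quotient_assign hsa with rfl | rfl
  · exact Or.inr (Or.inl (by decide))
  · exact Or.inr (Or.inr (by decide))

/-- Classification of quotients of `fig4S` that retain all of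
    g_good, G_good, g_bad, G_bad, H, J but not s₁. -/
lemma decompB {T' : Schema} (hq : IsQuotient T' fig4S)
    (h0 : Sym.fn 0 ∈ T'.syms) (h1 : Sym.fn 1 ∈ T'.syms) (h2 : Sym.fn 2 ∈ T'.syms)
    (h3 : Sym.fn 3 ∈ T'.syms) (h6 : Sym.fn 6 ∈ T'.syms) (h7 : Sym.fn 7 ∈ T'.syms)
    (hp3 : Sym.pn 3 ∉ T'.syms) :
    T' = qT0 ∨ T' = qT1' ∨ T' = fig4Sb := by
  rw [show fig4S = Schema.loop 0 [0] (Schema.seq (Schema.ite 1 [0]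
      (Schema.seq fig4Inner (Schema.seq fig4S1If (Schema.seq fig4S2If fig4TIf)))
      Schema.skip) (Schema.assign 0 7 [0])) from rfl] at hq
  rcases quotient_loop hq with rfl | ⟨B, rfl, hB⟩
  · exact absurd h7 (by decide)
  rcases quotient_seq hB with rfl | ⟨C, J, rfl, hC, hJ⟩
  · exact absurd h7 (by decide)
  rcases quotient_assign hJ with rfl | rfl
  · simp only [Schema.syms, List.mem_cons, List.mem_append] at h7
    simp at h7
    exact absurd (quotient_syms_subset hC _ h7) (by decide)
  rcases quotient_ite hC with rfl | ⟨Br, Sk, rfl, hBr, hSk⟩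
  · simp [Schema.syms] at h0
  have := quotient_skip hSk; subst this
  rcases quotient_seq hBr with rfl | ⟨I, R, rfl, hI, hR⟩
  · simp [Schema.syms] at h0
  simp only [Schema.syms, List.mem_cons, List.mem_append] at h0 h1 h2 h3 h6
  simp at h0 h1 h2 h3 h6
  have hRs := quotient_syms_subset hR
  have hIs := quotient_syms_subset hI
  have h0' : Sym.fn 0 ∈ I.syms := by
    rcases h0 with h | h
    · exact h
    · exact absurd (hRs _ h) (by decide)
  have h1' : Sym.fn 1 ∈ I.syms := by
    rcases h1 with h | h
    · exact h
    · exact absurd (hRs _ h) (by decide)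
  have h2' : Sym.fn 2 ∈ I.syms := by
    rcases h2 with h | h
    · exact h
    · exact absurd (hRs _ h) (by decide)
  have h3' : Sym.fn 3 ∈ I.syms := by
    rcases h3 with h | h
    · exact h
    · exact absurd (hRs _ h) (by decide)
  have h6' : Sym.fn 6 ∈ R.syms := by
    rcases h6 with h | h
    · exact absurd (hIs _ h) (by decide)
    · exact h
  clear h0 h1 h2 h3 h6 h7 hq hB hC hBr hRs hIs
  rw [show fig4Inner = Schema.ite 2 [0]
      (Schema.seq (Schema.assign 1 0 []) (Schema.assign 0 1 [1, 0]))
      (Schema.seq (Schema.assign 1 2 []) (Schema.assign 0 3 [1, 0])) from rfl] at hI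
  rcases quotient_ite hI with rfl | ⟨I1, I2, rfl, hI1, hI2⟩
  · simp [Schema.syms] at h0'
  simp only [Schema.syms, List.mem_cons, List.mem_append] at h0' h1' h2' h3'
  simp at h0' h1' h2' h3'
  have hI1s := quotient_syms_subset hI1
  have hI2s := quotient_syms_subset hI2
  have h0'' : Sym.fn 0 ∈ I1.syms := by
    rcases h0' with h | h
    · exact h
    · exact absurd (hI2s _ h) (by decide)
  have h1'' : Sym.fn 1 ∈ I1.syms := by
    rcases h1' with h | h
    · exact h
    · exact absurd (hI2s _ h) (by decide)
  have h2'' : Sym.fn 2 ∈ I2.syms := by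
    rcases h2' with h | h
    · exact absurd (hI1s _ h) (by decide)
    · exact h
  have h3'' : Sym.fn 3 ∈ I2.syms := by
    rcases h3' with h | h
    · exact absurd (hI1s _ h) (by decide)
    · exact h
  rcases quotient_seq hI1 with rfl | ⟨a1, a2, rfl, ha1, ha2⟩
  · simp [Schema.syms] at h0''
  rcases quotient_assign ha1 with rfl | rfl
  · simp only [Schema.syms, List.mem_append, List.nil_append] at h0''
    exact absurd (quotient_syms_subset ha2 _ h0'') (by decide)
  rcases quotient_assign ha2 with rfl | rfl
  · simp [Schema.syms] at h1''
  rcases quotient_seq hI2 with rfl | ⟨a3, a4, rfl, ha3, ha4⟩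
  · simp [Schema.syms] at h2''
  rcases quotient_assign ha3 with rfl | rfl
  · simp only [Schema.syms, List.mem_append, List.nil_append] at h2''
    exact absurd (quotient_syms_subset ha4 _ h2'') (by decide)
  rcases quotient_assign ha4 with rfl | rfl
  · simp [Schema.syms] at h3''
  rcases quotient_seq hR with rfl | ⟨S1s, R2, rfl, hS1, hR2⟩
  · simp [Schema.syms] at h6'
  simp only [Schema.syms, List.mem_cons, List.mem_append] at h6'
  have hS1s := quotient_syms_subset hS1
  have h6a : Sym.fn 6 ∈ R2.syms := by
    rcases h6' with h | h
    · exact absurd (hS1s _ h) (by decide)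
    · exact h
  rcases quotient_seq hR2 with rfl | ⟨S2s, Ts, rfl, hS2, hT⟩
  · simp [Schema.syms] at h6a
  simp only [Schema.syms, List.mem_cons, List.mem_append] at h6a
  have hS2s := quotient_syms_subset hS2
  have h6b : Sym.fn 6 ∈ Ts.syms := by
    rcases h6a with h | h
    · exact absurd (hS2s _ h) (by decide)
    · exact h
  rw [show fig4TIf = Schema.ite 5 [1] (Schema.assign 0 6 [0]) Schema.skip from rfl] at hT
  rcases quotient_ite hT with rfl | ⟨ta, tb, rfl, hta, htb⟩
  · simp [Schema.syms] at h6b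
  have := quotient_skip htb; subst this
  rcases quotient_assign hta with rfl | rfl
  · simp [Schema.syms] at h6b
  -- the s₁-if is deleted
  rw [show fig4S1If = Schema.ite 3 [0] (Schema.assign 1 4 []) Schema.skip from rfl] at hS1
  rcases quotient_ite hS1 with rfl | ⟨sa, sb, rfl, _, _⟩
  swap
  · exact absurd (by simp [Schema.syms]) hp3
  -- the s₂-if: three possibilities
  rw [show fig4S2If = Schema.ite 4 [0] (Schema.assign 1 5 []) Schema.skip from rfl] at hS2
  rcases quotient_ite hS2 with rfl | ⟨sa, sb, rfl, hsa, hsb⟩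
  · exact Or.inl (by decide)
  have := quotient_skip hsb; subst this
  rcases quotient_assign hsa with rfl | rfl
  · exact Or.inr (Or.inl (by decide))
  · exact Or.inr (Or.inr (by decide))

/-! ### Global facts about ρ -/

lemma consRho : Consistent myInterp natState fig4Rho :=
  consistent_of_consB (by decide)

lemma pathsRho : Paths fig4S fig4Rho := paths_of_parse 200 (by decide)

lemma prefixRho : PrefixOfPi myInterp natState (Schema.seq fig4S (Schema.label 0)) fig4Rho :=
  ⟨⟨fig4Rho ++ [Letter.lab 0], paths_of_parse 200 (by decide),
    List.prefix_append _ _⟩, consRho⟩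

lemma projA : proj (Schema.seq fig4Sa (Schema.label 0)) fig4Rho = muA := by decide
lemma projB : proj (Schema.seq fig4Sb (Schema.label 0)) fig4Rho = muB := by decide

/-! ### The two path-faithful dynamic end slices -/

lemma pfdsA : IsPFDSEnd fig4S fig4Rho {0} fig4Sa := by
  constructor
  · intro v hv
    have hv0 : v = 0 := hv
    subst hv0
    rw [projA]
    exact hExec_muA
  · intro D i d hp
    rw [projA]
    exact ⟨⟨muA ++ [Letter.lab 0], paths_of_parse 200 (by decide),
      List.prefix_append _ _⟩, transferA i d hp.2⟩

lemma pfdsB : IsPFDSEnd fig4S fig4Rho {0} fig4Sb := by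
  constructor
  · intro v hv
    have hv0 : v = 0 := hv
    subst hv0
    rw [projB]
    exact hExec_muB
  · intro D i d hp
    rw [projB]
    exact ⟨⟨muB ++ [Letter.lab 0], paths_of_parse 200 (by decide),
      List.prefix_append _ _⟩, transferB i d hp.2⟩

/-! ### Refutations of smaller candidate slices -/

lemma refuteRun {T' : Schema} (τ : List Letter)
    (hτp : Paths (Schema.seq T' (Schema.label 0)) τ)
    (hτc : Consistent myInterp natState τ)
    (hbound : ∀ σ ∈ τ.inits, cntF 6 30 (hExec σ 0) ≤ 3) :
    ¬ IsDSEnd fig4S fig4Rho {0} T' := by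
  intro h
  obtain ⟨ρ', ⟨⟨τ₂, hτ₂, hpre⟩, hc⟩, _, hval⟩ := h Tm myInterp natState prefixRho
  have hp : ρ' <+: τ := prefix_of_run hτ₂ hpre hc hτp hτc
  have hb := hbound ρ' ((List.mem_inits _ _).2 hp)
  have hv := hval 0 (Set.mem_singleton 0)
  rw [hv] at hb
  rw [show cntF 6 30 (hExec fig4Rho 0) = 4 from by decide] at hb
  omega

lemma refuteT0 : ¬ IsDSEnd fig4S fig4Rho {0} qT0 :=
  refuteRun tau0 (paths_of_parse 200 (by decide))
    (consistent_of_consB (by decide)) (by decide)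

lemma refuteT1 : ¬ IsDSEnd fig4S fig4Rho {0} qT1 :=
  refuteRun tau1 (paths_of_parse 200 (by decide))
    (consistent_of_consB (by decide)) (by decide)

lemma refuteT1' : ¬ IsDSEnd fig4S fig4Rho {0} qT1' :=
  refuteRun tau1' (paths_of_parse 200 (by decide))
    (consistent_of_consB (by decide)) (by decide)

lemma refuteFn {T' : Schema} (f : Fn) (hocc : OccFn f (hExec fig4Rho 0))
    (hf : Sym.fn f ∉ T'.syms) : ¬ IsDSEnd fig4S fig4Rho {0} T' := by
  intro h
  obtain ⟨ρ', ⟨⟨τ₂, hτ₂, hpre⟩, _⟩, _, hval⟩ := h Tm myInterp natState prefixRho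
  have hv := hval 0 (Set.mem_singleton 0)
  have hno : ∀ y xs, Letter.asgn y f xs ∉ ρ' := by
    intro y xs hm
    have hmem := paths_mem_syms hτ₂ _ (hpre.subset hm)
    simp only [Schema.syms, Letter.sym, List.mem_append, List.mem_singleton] at hmem
    rcases hmem with hmem | hmem
    · exact hf hmem
    · simp at hmem
  have hno' := occ_exec ρ' natState (fun u hc => by cases hc) hno 0
  exact hno' (show OccFn f (hExec ρ' 0) by rw [hv]; exact hocc)

lemma occ0 : OccFn 0 (hExec fig4Rho 0) := occB_sound 30 _ (by decide)
lemma occ1 : OccFn 1 (hExec fig4Rho 0) := occB_sound 30 _ (by decide)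
lemma occ2 : OccFn 2 (hExec fig4Rho 0) := occB_sound 30 _ (by decide)
lemma occ3 : OccFn 3 (hExec fig4Rho 0) := occB_sound 30 _ (by decide)
lemma occ6 : OccFn 6 (hExec fig4Rho 0) := occB_sound 30 _ (by decide)
lemma occ7 : OccFn 7 (hExec fig4Rho 0) := occB_sound 30 _ (by decide)

/-! ### Minimality -/

lemma minA : ∀ T', IsQuotient T' fig4S → fpsyms T' ⊂ fpsyms fig4Sa →
    ¬ IsDSEnd fig4S fig4Rho {0} T' := by
  intro T' hq hss
  have hsub := hss.1
  by_cases hf0 : Sym.fn 0 ∈ T'.syms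
  swap
  · exact refuteFn 0 occ0 hf0
  by_cases hf1 : Sym.fn 1 ∈ T'.syms
  swap
  · exact refuteFn 1 occ1 hf1
  by_cases hf2 : Sym.fn 2 ∈ T'.syms
  swap
  · exact refuteFn 2 occ2 hf2
  by_cases hf3 : Sym.fn 3 ∈ T'.syms
  swap
  · exact refuteFn 3 occ3 hf3
  by_cases hf6 : Sym.fn 6 ∈ T'.syms
  swap
  · exact refuteFn 6 occ6 hf6
  by_cases hf7 : Sym.fn 7 ∈ T'.syms
  swap
  · exact refuteFn 7 occ7 hf7
  have hp4 : Sym.pn 4 ∉ T'.syms := by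
    intro hmem
    have h' : Sym.pn 4 ∈ fpsyms fig4Sa := hsub ⟨hmem, fun l => by simp⟩
    exact absurd h'.1 (by decide)
  rcases decompA hq hf0 hf1 hf2 hf3 hf6 hf7 hp4 with rfl | rfl | rfl
  · exact refuteT0
  · exact refuteT1
  · exact absurd hss (ssubset_irrefl _)

lemma minB : ∀ T', IsQuotient T' fig4S → fpsyms T' ⊂ fpsyms fig4Sb →
    ¬ IsDSEnd fig4S fig4Rho {0} T' := by
  intro T' hq hss
  have hsub := hss.1
  by_cases hf0 : Sym.fn 0 ∈ T'.syms
  swap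
  · exact refuteFn 0 occ0 hf0
  by_cases hf1 : Sym.fn 1 ∈ T'.syms
  swap
  · exact refuteFn 1 occ1 hf1
  by_cases hf2 : Sym.fn 2 ∈ T'.syms
  swap
  · exact refuteFn 2 occ2 hf2
  by_cases hf3 : Sym.fn 3 ∈ T'.syms
  swap
  · exact refuteFn 3 occ3 hf3
  by_cases hf6 : Sym.fn 6 ∈ T'.syms
  swap
  · exact refuteFn 6 occ6 hf6
  by_cases hf7 : Sym.fn 7 ∈ T'.syms
  swap
  · exact refuteFn 7 occ7 hf7
  have hp3 : Sym.pn 3 ∉ T'.syms := by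
    intro hmem
    have h' : Sym.pn 3 ∈ fpsyms fig4Sb := hsub ⟨hmem, fun l => by simp⟩
    exact absurd h'.1 (by decide)
  rcases decompB hq hf0 hf1 hf2 hf3 hf6 hf7 hp3 with rfl | rfl | rfl
  · exact refuteT0
  · exact refuteT1'
  · exact absurd hss (ssubset_irrefl _)

lemma quotA : IsQuotient fig4Sa fig4S :=
  IsQuotient.loop (IsQuotient.seq
    (IsQuotient.ite
      (IsQuotient.seq (.refl _)
        (IsQuotient.seq (.refl _) (IsQuotient.seq (.skip _) (.refl _))))
      (.refl _))
    (.refl _))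

lemma quotB : IsQuotient fig4Sb fig4S :=
  IsQuotient.loop (IsQuotient.seq
    (IsQuotient.ite
      (IsQuotient.seq (.refl _)
        (IsQuotient.seq (.skip _) (IsQuotient.seq (.refl _) (.refl _))))
      (.refl _))
    (.refl _))

lemma mainFacts :
    fig4S.Linear ∧ Paths fig4S fig4Rho ∧ Executable fig4S fig4Rho ∧
      IsQuotient fig4Sa fig4S ∧ IsQuotient fig4Sb fig4S ∧ fig4Sa ≠ fig4Sb ∧
      MinimalPFDSEnd fig4S fig4Rho {0} fig4Sa ∧
      MinimalPFDSEnd fig4S fig4Rho {0} fig4Sb :=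
  ⟨(by decide : (fig4S.syms).Nodup), pathsRho,
    ⟨Tm, myInterp, natState, ⟨fig4Rho, pathsRho, List.prefix_refl _⟩, consRho⟩,
    quotA, quotB, by decide, ⟨pfdsA, minA⟩, ⟨pfdsB, minB⟩⟩
/-- there exist a linear schema S, a variable v and an executable
    terminating path ρ through S having two distinct minimal (ρ,{v})-path-faithful
    dynamic end slices (minimality w.r.t. inclusion of retained function and predicate
    symbols, among (ρ,{v})-dynamic end slices); in particular, for the Figure 4 schema
    and the path ρ described there, the quotients S₁ (deleting the if guarded by s₂)
    and S₂ (deleting the if guarded by s₁) are distinct minimal (ρ,{v})-path-faithful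
    dynamic end slices of S. -/
theorem statement_16 :
    (∃ (S : Schema) (v : Var) (ρ : List Letter) (S₁ S₂ : Schema),
      S.Linear ∧ Paths S ρ ∧ Executable S ρ ∧
      IsQuotient S₁ S ∧ IsQuotient S₂ S ∧ S₁ ≠ S₂ ∧
      MinimalPFDSEnd S ρ {v} S₁ ∧ MinimalPFDSEnd S ρ {v} S₂) ∧
    (fig4S.Linear ∧ Paths fig4S fig4Rho ∧ Executable fig4S fig4Rho ∧
      IsQuotient fig4Sa fig4S ∧ IsQuotient fig4Sb fig4S ∧ fig4Sa ≠ fig4Sb ∧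
      MinimalPFDSEnd fig4S fig4Rho {0} fig4Sa ∧
      MinimalPFDSEnd fig4S fig4Rho {0} fig4Sb) := by
  refine ⟨⟨fig4S, 0, fig4Rho, fig4Sa, fig4Sb, ?_⟩, mainFacts⟩
  exact ⟨mainFacts.1, mainFacts.2.1, mainFacts.2.2.1, mainFacts.2.2.2.1,
    mainFacts.2.2.2.2.1, mainFacts.2.2.2.2.2.1, mainFacts.2.2.2.2.2.2.1,
    mainFacts.2.2.2.2.2.2.2⟩


end SchemaSlicing
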